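/- Let m ≥ 1, E = 2m, Q an orthogonal projection on ℂ^E = ℂ^m ⊕ ℂ^m, M_sy and M_asy the symmetric and antisymmetric diagonal subspaces, and 𝔖_Q := Q^⊥ − Q. Suppose a Dirac-type operator D has kernels satisfying dim ker p* = dim(ker Q ∩ M_sy) and dim ker p = dim((ker Q)^⊥ ∩ M_asy), with index Ind(D) := dim ker p* − dim ker p. Then Ind(D) = (1/2) tr 𝔖_Q. -/

import Mathlib

open Matrix

/-- The linear embedding c ↦ (c,c). -/
def symMap (m : ℕ) : (Fin m → ℂ) →ₗ[ℂ] (Fin m ⊕ Fin m → ℂ) where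
  toFun c := Sum.elim c c
  map_add' x y := by funext i; cases i <;> simp
  map_smul' r x := by funext i; cases i <;> simp

/-- The linear embedding c ↦ (c,−c). -/
def asymMap (m : ℕ) : (Fin m → ℂ) →ₗ[ℂ] (Fin m ⊕ Fin m → ℂ) where
  toFun c := Sum.elim c (-c)
  map_add' x y := by funext i; cases i <;> simp [add_comm]
  map_smul' r x := by funext i; cases i <;> simp

/-- The symmetric subspace M_sy = {(c,c)}. -/
noncomputable def Msy (m : ℕ) : Submodule ℂ (Fin m ⊕ Fin m → ℂ) := LinearMap.range (symMap m)

/-- The antisymmetric subspace M_asy = {(c,−c)}. -/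
noncomputable def Masy (m : ℕ) : Submodule ℂ (Fin m ⊕ Fin m → ℂ) := LinearMap.range (asymMap m)



open Module Submodule

noncomputable def eqv (m : ℕ) : (Fin m ⊕ Fin m → ℂ) ≃ₗ[ℂ] EuclideanSpace ℂ (Fin m ⊕ Fin m) :=
  (WithLp.linearEquiv 2 ℂ _).symm

variable {m : ℕ}

lemma ker_map (Q : Matrix (Fin m ⊕ Fin m) (Fin m ⊕ Fin m) ℂ) :
    (LinearMap.ker Q.mulVecLin).map (eqv m).toLinearMap = LinearMap.ker (Matrix.toEuclideanLin Q) := by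
  ext x
  simp only [Submodule.mem_map_equiv, eqv, Matrix.toEuclideanLin_apply, Matrix.mulVecLin_apply,
    LinearMap.mem_ker, LinearMap.mem_range, WithLp.equiv, WithLp.linearEquiv, Equiv.refl_apply]
  exact ⟨fun h => congrArg (WithLp.toLp 2) h, fun h => congrArg WithLp.ofLp h⟩

lemma range_map (Q : Matrix (Fin m ⊕ Fin m) (Fin m ⊕ Fin m) ℂ) :
    (LinearMap.range Q.mulVecLin).map (eqv m).toLinearMap = LinearMap.range (Matrix.toEuclideanLin Q) := by
  ext x
  simp only [Submodule.mem_map, LinearMap.mem_range, Matrix.mulVecLin_apply]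
  constructor
  · rintro ⟨y, ⟨z, rfl⟩, rfl⟩
    refine ⟨(WithLp.equiv 2 _).symm z, ?_⟩
    rw [Matrix.toEuclideanLin_apply]; rfl
  · rintro ⟨y, rfl⟩
    exact ⟨Q *ᵥ (WithLp.equiv 2 _ y), ⟨_, rfl⟩, by rw [Matrix.toEuclideanLin_apply]; rfl⟩

lemma symMap_inj : Function.Injective (symMap m) := by
  intro a b h
  funext i
  exact congrFun h (Sum.inl i)

lemma asymMap_inj : Function.Injective (asymMap m) := by
  intro a b h
  funext i
  exact congrFun h (Sum.inl i)

lemma frk (p : Submodule ℂ (Fin m ⊕ Fin m → ℂ)) :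
    finrank ℂ (p.map (eqv m).toLinearMap) = finrank ℂ p :=
  LinearEquiv.finrank_map_eq (eqv m) p

lemma finrank_Msy : finrank ℂ (Msy m) = m := by
  rw [Msy, LinearMap.finrank_range_of_inj symMap_inj]; simp

lemma finrank_Masy : finrank ℂ (Masy m) = m := by
  rw [Masy, LinearMap.finrank_range_of_inj asymMap_inj]; simp

lemma masy_orth : (Masy m).map (eqv m).toLinearMap = (((Msy m).map (eqv m).toLinearMap))ᗮ := by
  have card : finrank ℂ (EuclideanSpace ℂ (Fin m ⊕ Fin m)) = 2 * m := by
    simp [finrank_euclideanSpace]; ring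
  apply Submodule.eq_of_le_of_finrank_eq
  · rintro x hx
    rw [Submodule.mem_map] at hx
    obtain ⟨y, hy, rfl⟩ := hx
    rw [Masy, LinearMap.mem_range] at hy
    obtain ⟨d, rfl⟩ := hy
    rw [Submodule.mem_orthogonal]
    rintro u hu
    rw [Submodule.mem_map] at hu
    obtain ⟨v, hv, rfl⟩ := hu
    rw [Msy, LinearMap.mem_range] at hv
    obtain ⟨c, rfl⟩ := hv
    simp [PiLp.inner_apply, eqv, symMap, asymMap, RCLike.inner_apply, Fintype.sum_sum_type,
      mul_comm]
  · have h1 := frk (m := m) (Masy m)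
    have h2 := frk (m := m) (Msy m)
    have h3 := Submodule.finrank_add_finrank_orthogonal ((Msy m).map (eqv m).toLinearMap)
    rw [card] at h3
    rw [h1, finrank_Masy]
    rw [h2, finrank_Msy] at h3
    omega

lemma range_orth (Q : Matrix (Fin m ⊕ Fin m) (Fin m ⊕ Fin m) ℂ) (hQ : Qᴴ = Q) :
    LinearMap.range (Matrix.toEuclideanLin Q) = (LinearMap.ker (Matrix.toEuclideanLin Q))ᗮ := by
  set L := Matrix.toEuclideanLin Q with hL
  have hadj : LinearMap.adjoint L = L := by
    rw [← Matrix.toEuclideanLin_conjTranspose_eq_adjoint, hQ]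
  have card : finrank ℂ (EuclideanSpace ℂ (Fin m ⊕ Fin m)) = 2 * m := by
    simp [finrank_euclideanSpace]; ring
  apply Submodule.eq_of_le_of_finrank_eq
  · rintro x ⟨y, rfl⟩
    rw [Submodule.mem_orthogonal]
    rintro u hu
    rw [LinearMap.mem_ker] at hu
    calc inner ℂ u (L y) = inner ℂ (LinearMap.adjoint L u) y := (LinearMap.adjoint_inner_left L y u).symm
    _ = (0 : ℂ) := by rw [hadj, hu, inner_zero_left]
  · have h1 := LinearMap.finrank_range_add_finrank_ker L
    have h2 := Submodule.finrank_add_finrank_orthogonal (LinearMap.ker L)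
    rw [card] at h1 h2
    omega

/-- The pre-index theorem combined with the trace formula: for the Dirac operator D with
kernels of p* and p of the given dimensions, Ind(D) = ½ tr 𝔖_Q with 𝔖_Q = Q^⊥ − Q = 1 − 2Q. -/
theorem stmt17 {m : ℕ} (hm : 0 < m) (Q : Matrix (Fin m ⊕ Fin m) (Fin m ⊕ Fin m) ℂ)
    (hQ : Qᴴ = Q) (hQ2 : Q * Q = Q)
    (dimKerPstar dimKerP : ℕ)
    (hstar : dimKerPstar = Module.finrank ℂ ↥(LinearMap.ker Q.mulVecLin ⊓ Msy m))
    (hp : dimKerP = Module.finrank ℂ ↥(LinearMap.range Q.mulVecLin ⊓ Masy m)) :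
    (dimKerPstar : ℂ) - (dimKerP : ℂ) =
      (1 / 2) * Matrix.trace ((1 : Matrix (Fin m ⊕ Fin m) (Fin m ⊕ Fin m) ℂ) - (2 : ℂ) • Q) := by
  classical
  set L := Matrix.toEuclideanLin Q with hL
  set K := LinearMap.ker L with hK
  set S := (Msy m).map (eqv m).toLinearMap with hS
  set r := finrank ℂ (LinearMap.range Q.mulVecLin) with hr
  have card : finrank ℂ (EuclideanSpace ℂ (Fin m ⊕ Fin m)) = 2 * m := by
    simp [finrank_euclideanSpace]; ring
  -- A = finrank (K ⊓ S)
  have hA : dimKerPstar = finrank ℂ ↥(K ⊓ S) := by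
    rw [hstar, ← frk (LinearMap.ker Q.mulVecLin ⊓ Msy m),
      Submodule.map_inf _ (eqv m).injective, ker_map]
  have hB : dimKerP = finrank ℂ ↥((K ⊔ S)ᗮ) := by
    rw [hp, ← frk (LinearMap.range Q.mulVecLin ⊓ Masy m),
      Submodule.map_inf _ (eqv m).injective, range_map, range_orth Q hQ, masy_orth,
      Submodule.inf_orthogonal]
  -- dimension bookkeeping
  have hrK : r + finrank ℂ K = 2 * m := by
    have h1 := LinearMap.finrank_range_add_finrank_ker L
    rw [card, ← hK] at h1
    have h2 : finrank ℂ (LinearMap.range L) = r := by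
      rw [hr, ← frk (LinearMap.range Q.mulVecLin), range_map]
    omega
  have hsup := Submodule.finrank_sup_add_finrank_inf_eq K S
  have hSfin : finrank ℂ S = m := by rw [hS, frk, finrank_Msy]
  have horth := Submodule.finrank_add_finrank_orthogonal (K ⊔ S)
  rw [card] at horth
  -- key natural-number identity : dimKerP + m = dimKerPstar + r
  have key : dimKerP + m = dimKerPstar + r := by
    have hKS : finrank ℂ ↥(K ⊓ S) ≤ finrank ℂ K := Submodule.finrank_mono inf_le_left
    omega
  -- trace computation
  have hproj : LinearMap.IsProj (LinearMap.range Q.mulVecLin) Q.mulVecLin := by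
    constructor
    · intro x; exact LinearMap.mem_range_self _ x
    · rintro x ⟨y, rfl⟩
      have := congrArg (fun M : Matrix (Fin m ⊕ Fin m) (Fin m ⊕ Fin m) ℂ => M.mulVecLin y) hQ2
      simpa [Matrix.mulVecLin_mul] using this
  have htr : Matrix.trace Q = (r : ℂ) := by
    have h1 : LinearMap.trace ℂ _ Q.mulVecLin = (r : ℂ) := hproj.trace
    rw [← h1, LinearMap.trace_eq_matrix_trace ℂ (Pi.basisFun ℂ (Fin m ⊕ Fin m))]
    congr 1
    rw [LinearMap.toMatrix_eq_toMatrix', ← Matrix.toLin'_apply', LinearMap.toMatrix'_toLin']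
  have htr2 : Matrix.trace ((1 : Matrix (Fin m ⊕ Fin m) (Fin m ⊕ Fin m) ℂ) - (2 : ℂ) • Q)
      = 2 * (m : ℂ) - 2 * (r : ℂ) := by
    rw [Matrix.trace_sub, Matrix.trace_smul, Matrix.trace_one, htr]
    simp [Fintype.card_sum]
    ring
  rw [htr2]
  have keyC : (dimKerP : ℂ) + m = dimKerPstar + r := by exact_mod_cast congrArg (Nat.cast : ℕ → ℂ) key
  linear_combination -keyC
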